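/- Let V be a finite-dimensional real or complex Hilbert space, G ≤ Aut(V) finite, and v, w ∈ V with ‖v‖ ≠ ‖w‖ and such that g ↦ ‖v − gw‖ is injective on G and |Gv| = |Gw| = |G|. Then every permutation σ of Gv ∪ Gw extending to a linear isometry of V maps Gv to itself, and σ is uniquely determined by its restriction to Gv. -/

import Mathlib

/-- Orbit pairing lemma, conclusion part: if `‖v‖ ≠ ‖w‖`, `g ↦ ‖v - g w‖` is
injective on `G`, and both orbits have `|G|` elements, then any permutation of
`Gv ∪ Gw` extending to a linear isometry maps `Gv` to itself and is uniquely
determined by its restriction to `Gv`. -/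
theorem stmt_13 (𝕜 : Type*) [RCLike 𝕜] (V : Type*) [NormedAddCommGroup V]
    [InnerProductSpace 𝕜 V] [FiniteDimensional 𝕜 V]
    (G : Subgroup (V ≃ₗᵢ[𝕜] V)) [Finite G] (v w : V)
    (Sv Sw : Set V)
    (hSv : Sv = Set.range fun g : G => (g : V ≃ₗᵢ[𝕜] V) v)
    (hSw : Sw = Set.range fun g : G => (g : V ≃ₗᵢ[𝕜] V) w)
    (hnorm : ‖v‖ ≠ ‖w‖)
    (hinj : Function.Injective fun g : G => ‖v - (g : V ≃ₗᵢ[𝕜] V) w‖)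
    (hcv : Sv.ncard = Nat.card G) (hcw : Sw.ncard = Nat.card G) :
    ∀ σ τ : Equiv.Perm (Sv ∪ Sw : Set V),
      (∃ M : V ≃ₗᵢ[𝕜] V, ∀ x : (Sv ∪ Sw : Set V), (σ x : V) = M x) →
      (∃ N : V ≃ₗᵢ[𝕜] V, ∀ x : (Sv ∪ Sw : Set V), (τ x : V) = N x) →
        (∀ x : (Sv ∪ Sw : Set V), (x : V) ∈ Sv → (σ x : V) ∈ Sv) ∧
        ((∀ x : (Sv ∪ Sw : Set V), (x : V) ∈ Sv → σ x = τ x) → σ = τ) := by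
  intro σ τ hσ hτ
  obtain ⟨M, hM⟩ := hσ
  obtain ⟨N, hN⟩ := hτ
  -- norms of elements of the orbits
  have hnv : ∀ x ∈ Sv, ‖x‖ = ‖v‖ := by
    rintro x hx
    rw [hSv] at hx
    obtain ⟨g, rfl⟩ := hx
    exact (g : V ≃ₗᵢ[𝕜] V).norm_map v
  have hnw : ∀ x ∈ Sw, ‖x‖ = ‖w‖ := by
    rintro x hx
    rw [hSw] at hx
    obtain ⟨g, rfl⟩ := hx
    exact (g : V ≃ₗᵢ[𝕜] V).norm_map w
  have hmemv : ∀ g : G, (g : V ≃ₗᵢ[𝕜] V) v ∈ Sv := fun g => by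
    rw [hSv]; exact ⟨g, rfl⟩
  have hmemw : ∀ g : G, (g : V ≃ₗᵢ[𝕜] V) w ∈ Sw := fun g => by
    rw [hSw]; exact ⟨g, rfl⟩
  have memv : ∀ {z : V}, z ∈ Sv → ∃ b : G, (b : V ≃ₗᵢ[𝕜] V) v = z := by
    intro z hz; rw [hSv] at hz; exact hz
  have memw : ∀ {z : V}, z ∈ Sw → ∃ b : G, (b : V ≃ₗᵢ[𝕜] V) w = z := by
    intro z hz; rw [hSw] at hz; exact hz
  -- a permutation extending to an isometry preserves Sv and Sw
  have key : ∀ (ρ : Equiv.Perm (Sv ∪ Sw : Set V)) (P : V ≃ₗᵢ[𝕜] V),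
      (∀ x : (Sv ∪ Sw : Set V), (ρ x : V) = P x) →
      ∀ x : (Sv ∪ Sw : Set V),
        ((x : V) ∈ Sv → (ρ x : V) ∈ Sv) ∧ ((x : V) ∈ Sw → (ρ x : V) ∈ Sw) := by
    intro ρ P hP x
    have hρx : (ρ x : V) ∈ Sv ∪ Sw := (ρ x).2
    have hnρ : ‖(ρ x : V)‖ = ‖(x : V)‖ := by rw [hP]; exact P.norm_map _
    constructor
    · intro hxv
      rcases hρx with h | h
      · exact h
      · exact absurd (by rw [← hnv _ hxv, ← hnρ, hnw _ h]) hnorm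
    · intro hxw
      rcases hρx with h | h
      · exact absurd (by rw [← hnw _ hxw, ← hnρ, hnv _ h]) (Ne.symm hnorm)
      · exact h
  -- injectivity of g ↦ g v
  have hv_inj : Function.Injective fun g : G => (g : V ≃ₗᵢ[𝕜] V) v := by
    set f := fun g : G => (g : V ≃ₗᵢ[𝕜] V) v with hf
    have hcard : Nat.card G = Nat.card (Set.range f) := by
      rw [Nat.card_coe_set_eq, ← hSv, hcv]
    have hb : Function.Bijective (Set.rangeFactorization f) :=
      (Nat.bijective_iff_surjective_and_card _).2 ⟨Set.rangeFactorization_surjective, hcard⟩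
    intro a b hab
    exact hb.1 (Subtype.ext hab)
  -- for g in G, ‖v - g w‖ = ‖v - w‖ implies g = 1
  have hone : ∀ g : G, ‖v - (g : V ≃ₗᵢ[𝕜] V) w‖ = ‖v - w‖ → g = 1 := by
    intro g hg
    apply hinj
    simpa using hg
  -- the crucial pairing: if ρ extends to an isometry P, x = g w, and
  -- ρ ⟨g v⟩ = a v, then ρ x = a w
  have pair : ∀ (ρ : Equiv.Perm (Sv ∪ Sw : Set V)) (P : V ≃ₗᵢ[𝕜] V),
      (∀ x : (Sv ∪ Sw : Set V), (ρ x : V) = P x) →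
      ∀ (g : G) (x : (Sv ∪ Sw : Set V)), (x : V) = (g : V ≃ₗᵢ[𝕜] V) w →
      ∀ a : G, (ρ ⟨(g : V ≃ₗᵢ[𝕜] V) v, Or.inl (hmemv g)⟩ : V)
        = (a : V ≃ₗᵢ[𝕜] V) v → (ρ x : V) = (a : V ≃ₗᵢ[𝕜] V) w := by
    intro ρ P hP g x hx a ha
    set xv : (Sv ∪ Sw : Set V) := ⟨(g : V ≃ₗᵢ[𝕜] V) v, Or.inl (hmemv g)⟩
    have hρxw : (ρ x : V) ∈ Sw := (key ρ P hP x).2 (by rw [hx]; exact hmemw g)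
    obtain ⟨b, hb⟩ := memw hρxw
    have hdist : ‖(a : V ≃ₗᵢ[𝕜] V) v - (b : V ≃ₗᵢ[𝕜] V) w‖ = ‖v - w‖ := by
      rw [← ha, hb, hP xv, hP x, ← map_sub]
      rw [P.norm_map]
      show ‖(xv : V) - (x : V)‖ = _
      rw [hx]
      show ‖(g : V ≃ₗᵢ[𝕜] V) v - (g : V ≃ₗᵢ[𝕜] V) w‖ = _
      rw [← map_sub, (g : V ≃ₗᵢ[𝕜] V).norm_map]
    have hab : a⁻¹ * b = 1 := by
      apply hone
      have : ((a⁻¹ * b : G) : V ≃ₗᵢ[𝕜] V) w = ((a : V ≃ₗᵢ[𝕜] V)).symm ((b : V ≃ₗᵢ[𝕜] V) w) := rfl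
      rw [this]
      have : v - ((a : V ≃ₗᵢ[𝕜] V)).symm ((b : V ≃ₗᵢ[𝕜] V) w)
          = ((a : V ≃ₗᵢ[𝕜] V)).symm ((a : V ≃ₗᵢ[𝕜] V) v - (b : V ≃ₗᵢ[𝕜] V) w) := by
        rw [map_sub]
        simp
      rw [this, ((a : V ≃ₗᵢ[𝕜] V)).symm.norm_map, hdist]
    have hba : a = b := by rwa [inv_mul_eq_one] at hab
    rw [← hb, hba]
  refine ⟨fun x hx => (key σ M hM x).1 hx, ?_⟩
  intro hagree
  ext x
  rcases x.2 with hx | hx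
  · exact congrArg Subtype.val (hagree x hx)
  · obtain ⟨g, hg⟩ := memw hx
    set xv : (Sv ∪ Sw : Set V) := ⟨(g : V ≃ₗᵢ[𝕜] V) v, Or.inl (hmemv g)⟩
    have hσv : (σ xv : V) ∈ Sv := (key σ M hM xv).1 (hmemv g)
    obtain ⟨a, ha⟩ := memv hσv
    have hτv : (τ xv : V) = (a : V ≃ₗᵢ[𝕜] V) v := by
      rw [← congrArg Subtype.val (hagree xv (hmemv g)), ha]
    have h1 := pair σ M hM g x hg.symm a ha.symm
    have h2 := pair τ N hN g x hg.symm a hτv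
    exact h1.trans h2.symm
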